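/- For an element x ∈ F_{q^m} written in a fixed F_q-basis, and a codeword x = (x_1,...,x_n) ∈ (F_{q^m})^n with coordinate expansion matrix M_B(x) ∈ F_q^{m×n} (i-th column the coordinate vector of x_i), the F_q-dimension of the row space of the block matrix stacking M_B(x_1),...,M_B(x_r) for a basis x_1,...,x_r of a subcode D equals the F_q-dimension of the column span of the matrix whose rows are x_1,...,x_r; hence the matrix-support definition of generalized rank weights (Jurrius–Pellikaan) coincides with the q-support definition. -/

import Mathlib

open Matrix

/-- The `Fq`-linear equivalence `(Fin r → Fqm) ≃ (Fin r × Fin m → Fq)` given by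
coordinate expansion in the basis `B` at each entry. -/
noncomputable def expandEquiv {Fq Fqm : Type*} [Field Fq] [Field Fqm] [Algebra Fq Fqm]
    {m r : ℕ} (B : Module.Basis (Fin m) Fq Fqm) :
    (Fin r → Fqm) ≃ₗ[Fq] (Fin r × Fin m → Fq) where
  toFun v p := B.equivFun (v p.1) p.2
  invFun g i := B.equivFun.symm (fun k => g (i, k))
  map_add' u v := by funext p; simp
  map_smul' c v := by funext p; simp
  left_inv v := funext fun i => B.equivFun.symm_apply_apply (v i)
  right_inv g := funext fun p =>
    congrFun (B.equivFun.apply_symm_apply (fun k => g (p.1, k))) p.2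

/-- With respect to a fixed `F_q`-basis `B` of `F_{q^m}`, for a subcode `D`
with `F_{q^m}`-basis `x_1,…,x_r`, the `F_q`-dimension of the row space of the stacked
coordinate-expansion matrices `M_B(x_1),…,M_B(x_r)` equals the `F_q`-dimension of the
column span of the matrix whose rows are `x_1,…,x_r`; hence the matrix-support
(Jurrius–Pellikaan) and q-support definitions of generalized rank weights coincide. -/
theorem matrixSupport_dim_eq_qSupport_dim
    {Fq Fqm : Type*} [Field Fq] [Field Fqm] [Algebra Fq Fqm]
    {m n r : ℕ} (B : Module.Basis (Fin m) Fq Fqm)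
    (C D : Submodule Fqm (Fin n → Fqm)) (hDC : D ≤ C)
    (xs : Fin r → Fin n → Fqm)
    (hxs : LinearIndependent Fqm xs)
    (hxsD : Submodule.span Fqm (Set.range xs) = D) :
    Module.finrank Fq (Submodule.span Fq
        (Set.range fun p : Fin r × Fin m =>
          fun j : Fin n => B.repr (xs p.1 j) p.2)) =
      Module.finrank Fq (Submodule.span Fq
        (Set.range fun j : Fin n => fun i : Fin r => xs i j)) := by
  classical
  set M : Matrix (Fin r × Fin m) (Fin n) Fq :=
    Matrix.of (fun p j => B.repr (xs p.1 j) p.2) with hM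
  -- LHS is the row-space dimension of M, which equals its rank, which equals the
  -- column-space (= row space of transpose) dimension.
  have h1 : Module.finrank Fq (Submodule.span Fq
      (Set.range fun p : Fin r × Fin m => fun j : Fin n => B.repr (xs p.1 j) p.2)) =
      M.rank := by
    rw [Matrix.rank_eq_finrank_span_row]
    rfl
  have h2 : M.rank = Mᵀ.rank := (Matrix.rank_transpose M).symm
  have h3 : Mᵀ.rank = Module.finrank Fq (Submodule.span Fq (Set.range Mᵀ)) :=
    Matrix.rank_eq_finrank_span_row Mᵀ
  rw [h1, h2, h3]
  -- Now transport along the expansion equivalence.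
  let e := expandEquiv (r := r) B
  have hmap : Submodule.map (e : (Fin r → Fqm) →ₗ[Fq] (Fin r × Fin m → Fq))
      (Submodule.span Fq (Set.range fun j : Fin n => fun i : Fin r => xs i j)) =
      Submodule.span Fq (Set.range Mᵀ) := by
    rw [Submodule.map_span]
    congr 1
    rw [← Set.range_comp]
    refine congrArg Set.range ?_
    funext j
    funext p
    show B.equivFun (xs p.1 j) p.2 = B.repr (xs p.1 j) p.2
    rfl
  calc Module.finrank Fq (Submodule.span Fq (Set.range Mᵀ))
      = Module.finrank Fq (Submodule.map (e : (Fin r → Fqm) →ₗ[Fq] (Fin r × Fin m → Fq))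
          (Submodule.span Fq (Set.range fun j : Fin n => fun i : Fin r => xs i j))) := by
        rw [hmap]
    _ = Module.finrank Fq (Submodule.span Fq
          (Set.range fun j : Fin n => fun i : Fin r => xs i j)) :=
        LinearEquiv.finrank_map_eq e _
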